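/- Let d ≥ 2 and θ ∈ ℝ. Then lim_{m→∞} (1/log m) · Σ_{i=1}^m log(1 + ((d+1)/(d·i+1))·(e^{θ} − 1)) = ((d+1)/d)·(e^{θ} − 1). (This says the normalized cumulant generating function of G_m = Σ_{i=1}^m B_i, with B_i independent Bernoulli((d+1)/(d·i+1)), converges to the cumulant generating function of a Poisson((d+1)/d) variable.) -/

import Mathlib

open Filter Real

private lemma aux_sum_div_log {a : ℕ → ℝ} {L : ℝ}
    (hb : Tendsto (fun i : ℕ => (i : ℝ) * a i) atTop (nhds L)) :
    Tendsto (fun m : ℕ => (1 / Real.log m) * ∑ i ∈ Finset.Icc 1 m, a i)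
      atTop (nhds L) := by
  set g : ℕ → ℝ := fun i => (i : ℝ)⁻¹ with hg
  set F : ℕ → ℝ := fun i => if i = 0 then 0 else a i with hF
  set f : ℕ → ℝ := fun i => F i - L * g i with hf
  have hgnonneg : ∀ i, 0 ≤ g i := fun i => by positivity
  -- f = o(g)
  have hfo : f =o[atTop] g := by
    refine Asymptotics.isLittleO_of_tendsto' (Eventually.of_forall fun i h0 => ?_) ?_
    · have hi0 : i = 0 := by
        by_contra h
        exact (inv_ne_zero (Nat.cast_ne_zero.mpr h)) h0
      simp [hf, hF, hg, hi0]
    · have hE : (fun i => f i / g i) =ᶠ[atTop] fun i => (i : ℝ) * a i - L := by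
        filter_upwards [eventually_ge_atTop 1] with i hi
        have h0 : (i : ℝ) ≠ 0 := Nat.cast_ne_zero.mpr (by omega)
        have hFi : F i = a i := by
          show (if i = 0 then 0 else a i) = a i
          rw [if_neg (by omega : ¬ i = 0)]
        simp only [hf, hFi, hg]
        field_simp
      refine Tendsto.congr' hE.symm ?_
      simpa using hb.sub_const L
  -- sum of g diverges
  have h'g : Tendsto (fun n => ∑ i ∈ Finset.range n, g i) atTop atTop := by
    rw [← tendsto_add_atTop_iff_nat 1]
    have hsum : ∀ n : ℕ, ∑ i ∈ Finset.range (n + 1), g i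
        = ∑ i ∈ Finset.range n, 1 / ((i : ℝ) + 1) := by
      intro n
      rw [Finset.sum_range_succ']
      simp [hg, one_div]
    exact Tendsto.congr (fun n => (hsum n).symm) tendsto_sum_range_one_div_nat_succ_atTop
  have hlo := hfo.sum_range hgnonneg h'g
  set H : ℕ → ℝ := fun m => ∑ i ∈ Finset.range (m + 1), g i with hH
  have hHharm : ∀ m : ℕ, H m = (harmonic m : ℝ) := by
    intro m
    show ∑ i ∈ Finset.range (m + 1), g i = _
    rw [Finset.sum_range_succ']
    simp only [hg, Nat.cast_zero, inv_zero, add_zero]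
    rw [harmonic]
    push_cast
    rfl
  have hlog : Tendsto (fun m : ℕ => Real.log m) atTop atTop :=
    Real.tendsto_log_atTop.comp tendsto_natCast_atTop_atTop
  -- H m / log m → 1
  have hH1 : Tendsto (fun m : ℕ => H m / Real.log m) atTop (nhds 1) := by
    have h1 : Tendsto (fun m : ℕ => (H m - Real.log m) / Real.log m) atTop (nhds 0) := by
      have hnum : Tendsto (fun m : ℕ => H m - Real.log m) atTop
          (nhds Real.eulerMascheroniConstant) :=
        Tendsto.congr (fun m => by rw [hHharm m]) Real.tendsto_harmonic_sub_log
      exact hnum.div_atTop hlog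
    have h2 := h1.add_const 1
    rw [zero_add] at h2
    refine Tendsto.congr' ?_ h2
    filter_upwards [hlog.eventually_gt_atTop 0] with m hm
    field_simp
    ring
  -- error term over log → 0
  have hE0 : Tendsto (fun m : ℕ => (∑ i ∈ Finset.range (m + 1), f i) / Real.log m)
      atTop (nhds 0) := by
    have h1 : Tendsto (fun m : ℕ => (∑ i ∈ Finset.range (m + 1), f i) / H m) atTop (nhds 0) :=
      hlo.tendsto_div_nhds_zero.comp (tendsto_add_atTop_nat 1)
    have h2 := h1.mul hH1
    rw [zero_mul] at h2
    refine Tendsto.congr' ?_ h2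
    filter_upwards [eventually_ge_atTop 1] with m hm
    have hHpos : 0 < H m := by
      rw [hHharm m]
      exact_mod_cast harmonic_pos (by omega)
    field_simp
  -- sum identity
  have hFsum : ∀ m : ℕ, ∑ i ∈ Finset.range (m + 1), F i = ∑ i ∈ Finset.Icc 1 m, a i := by
    intro m
    induction m with
    | zero => simp [hF]
    | succ n ih =>
      rw [Finset.sum_range_succ, ih, Finset.sum_Icc_succ_top (by omega : 1 ≤ n + 1)]
      simp [hF]
  have hkey : ∀ m : ℕ, ∑ i ∈ Finset.Icc 1 m, a i
      = (∑ i ∈ Finset.range (m + 1), f i) + L * H m := by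
    intro m
    rw [← hFsum m, hH]
    simp only [hf]
    rw [Finset.sum_sub_distrib, ← Finset.mul_sum]
    ring
  have hfinal := hE0.add (hH1.const_mul L)
  rw [zero_add, mul_one] at hfinal
  refine Tendsto.congr' ?_ hfinal
  filter_upwards with m
  rw [hkey m]
  ring

/-- For `d ≥ 2` and `θ ∈ ℝ`,
`lim_{m→∞} (1/log m) · Σ_{i=1}^m log(1 + ((d+1)/(d·i+1))·(e^θ − 1)) = ((d+1)/d)·(e^θ − 1)`. -/
theorem normalized_cgf_tendsto_poisson_cgf (d : ℕ) (hd : 2 ≤ d) (θ : ℝ) :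
    Tendsto (fun m : ℕ => (1 / Real.log m) *
        ∑ i ∈ Finset.Icc 1 m,
          Real.log (1 + (((d : ℝ) + 1) / ((d : ℝ) * (i : ℝ) + 1)) * (Real.exp θ - 1)))
      atTop (nhds ((((d : ℝ) + 1) / (d : ℝ)) * (Real.exp θ - 1))) := by
  set t : ℝ := Real.exp θ - 1 with ht
  set c : ℕ → ℝ := fun i => ((d : ℝ) + 1) / ((d : ℝ) * (i : ℝ) + 1) with hc
  have hdpos : (0 : ℝ) < d := by
    have : (0 : ℕ) < d := by omega
    exact_mod_cast this
  have hcpos : ∀ i : ℕ, 0 < c i := by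
    intro i
    apply div_pos (by positivity)
    positivity
  by_cases ht0 : t = 0
  · simp only [ht0, mul_zero, zero_mul, add_zero, Real.log_one, Finset.sum_const_nat,
      Finset.sum_const, smul_zero]
    simp
  · apply aux_sum_div_log
    -- i * c i → (d+1)/d
    have hic : Tendsto (fun i : ℕ => (i : ℝ) * c i) atTop (nhds (((d : ℝ) + 1) / d)) := by
      have h1 : Tendsto (fun i : ℕ => ((d : ℝ) + 1) / ((d : ℝ) + (i : ℝ)⁻¹)) atTop
          (nhds (((d : ℝ) + 1) / ((d : ℝ) + 0))) :=
        tendsto_const_nhds.div (tendsto_const_nhds.add tendsto_inv_atTop_nhds_zero_nat)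
          (by rw [add_zero]; exact hdpos.ne')
      rw [add_zero] at h1
      refine Tendsto.congr' ?_ h1
      filter_upwards [eventually_ge_atTop 1] with i hi
      have h0 : (i : ℝ) ≠ 0 := Nat.cast_ne_zero.mpr (by omega)
      have h2 : (d : ℝ) * (i : ℝ) + 1 ≠ 0 := by positivity
      rw [hc]
      field_simp
    -- c i → 0
    have hc0 : Tendsto c atTop (nhds 0) := by
      apply Tendsto.div_atTop tendsto_const_nhds
      apply tendsto_atTop_add_const_right _ 1
      exact Tendsto.const_mul_atTop hdpos tendsto_natCast_atTop_atTop
    have hx0 : Tendsto (fun i : ℕ => c i * t) atTop (nhds 0) := by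
      simpa using hc0.mul_const t
    have hxne : ∀ i : ℕ, c i * t ≠ 0 := fun i => mul_ne_zero (hcpos i).ne' ht0
    -- log(1+x)/x → 1 along x = c i * t
    have hderiv : HasDerivAt (fun x : ℝ => Real.log (1 + x)) 1 0 := by
      have h := (((hasDerivAt_id (0 : ℝ)).const_add 1).log (by norm_num))
      simpa using h
    have hslope := hasDerivAt_iff_tendsto_slope.mp hderiv
    have hxw : Tendsto (fun i : ℕ => c i * t) atTop (nhdsWithin 0 {(0 : ℝ)}ᶜ) := by
      apply tendsto_nhdsWithin_of_tendsto_nhds_of_eventually_within _ hx0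
      exact Eventually.of_forall fun i => hxne i
    have hlim1 : Tendsto (fun i : ℕ => Real.log (1 + c i * t) / (c i * t)) atTop (nhds 1) := by
      have h := hslope.comp hxw
      refine Tendsto.congr ?_ h
      intro i
      simp only [Function.comp_apply, slope_def_field, sub_zero, add_zero, Real.log_one]
    -- assemble
    have hb := (hic.mul_const t).mul hlim1
    rw [mul_one] at hb
    refine Tendsto.congr ?_ hb
    intro i
    have hne := hxne i
    have h2 : Real.log (1 + c i * t) / (c i * t) * (c i * t) = Real.log (1 + c i * t) :=
      div_mul_cancel₀ _ hne
    linear_combination (i : ℝ) * h2
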